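/- Let E be a real inner product space, let A : ℝ → (E →L[ℝ] E) and let y : ℝ → E be differentiable with y'(s) = A(s)(y(s)). Fix s with y(s) ≠ 0 and set ŷ(τ) = y(τ)/‖y(τ)‖ (the normalized vector, defined near s). Then ŷ is differentiable at s and ‖ŷ'(s)‖ ≤ ‖A(s)‖, where ‖A(s)‖ is the operator norm of the continuous linear map A(s). -/

import Mathlib

open scoped RealInnerProductSpace

/-- If `y' = A(s) y` with `A(s)` a continuous linear map on a real inner product space,
and `y(s) ≠ 0`, then the normalized vector `ŷ(τ) = y(τ)/‖y(τ)‖` is differentiable at `s`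
and `‖ŷ'(s)‖ ≤ ‖A(s)‖`. -/
theorem magnus_stmt4 {E : Type*} [NormedAddCommGroup E] [InnerProductSpace ℝ E]
    (A : ℝ → (E →L[ℝ] E)) (y : ℝ → E)
    (hy : ∀ s : ℝ, HasDerivAt y (A s (y s)) s)
    (s : ℝ) (hs : y s ≠ 0) :
    DifferentiableAt ℝ (fun τ => ‖y τ‖⁻¹ • y τ) s ∧
      ‖deriv (fun τ => ‖y τ‖⁻¹ • y τ) s‖ ≤ ‖A s‖ := by
  set v : E := A s (y s) with hv
  set r : ℝ := ‖y s‖ with hr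
  have hr0 : 0 < r := norm_pos_iff.mpr hs
  have hdn : DifferentiableAt ℝ (fun τ => ‖y τ‖) s :=
    (hy s).differentiableAt.norm ℝ hs
  set d : ℝ := deriv (fun τ => ‖y τ‖) s with hd
  have hnorm : HasDerivAt (fun τ => ‖y τ‖) d s := hdn.hasDerivAt
  have hsq1 : HasDerivAt (fun τ => ‖y τ‖ ^ 2) (2 * ⟪y s, v⟫) s := (hy s).norm_sq
  have hsq2 : HasDerivAt (fun τ => ‖y τ‖ ^ 2) (2 * r * d) s := by
    have h : HasDerivAt (fun τ => ‖y τ‖ * ‖y τ‖) _ s := hnorm.mul hnorm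
    simp only [pow_two]
    convert h using 1
    ring
  have hdval : d = ⟪y s, v⟫ / r := by
    have h := hsq1.unique hsq2
    field_simp
    ring
    linarith
  have hinv : HasDerivAt (fun τ => ‖y τ‖⁻¹) (-d / r ^ 2) s := by
    exact hnorm.inv hr0.ne'
  obtain ⟨D, hDdef⟩ : ∃ D : E, D = (-d / r ^ 2) • y s + r⁻¹ • v := ⟨_, rfl⟩
  have hD : HasDerivAt (fun τ => ‖y τ‖⁻¹ • y τ) D s := by
    rw [hDdef]
    have h : HasDerivAt (fun τ => ‖y τ‖⁻¹ • y τ) _ s := hinv.smul (hy s)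
    convert h using 1
    module
  refine ⟨hD.differentiableAt, ?_⟩
  rw [hD.deriv]
  have hsum : D + (d / r ^ 2) • y s = r⁻¹ • v := by
    rw [hDdef]
    module
  have hperp : ⟪D, (d / r ^ 2) • y s⟫ = 0 := by
    rw [hDdef, hdval]
    rw [real_inner_smul_right, inner_add_left, real_inner_smul_left, real_inner_smul_left,
      real_inner_self_eq_norm_sq, ← hr, real_inner_comm v (y s)]
    field_simp
    ring
  have hkey : ‖D‖ ^ 2 ≤ ‖r⁻¹ • v‖ ^ 2 := by
    rw [← hsum, norm_add_sq_real, hperp]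
    nlinarith [sq_nonneg ‖(d / r ^ 2) • y s‖]
  have h1 : ‖D‖ ≤ ‖r⁻¹ • v‖ := by
    nlinarith [norm_nonneg D, norm_nonneg (r⁻¹ • v)]
  refine h1.trans ?_
  have hAv : ‖v‖ ≤ ‖A s‖ * r := (A s).le_opNorm (y s)
  rw [norm_smul, norm_inv, Real.norm_eq_abs, abs_of_pos hr0, inv_mul_le_iff₀ hr0]
  linarith
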